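/- Let F = {f_1,…,f_k} and G = {g_1,…,g_k} be finite transverse subsets of C[0,1] (with the f_i pairwise distinct and the g_i pairwise distinct), and let φ be the bijection φ(f_i) = g_i. Let X = (⋃_{i≠j} cr(f_i,f_j)) ∪ {0,1} and Y = (⋃_{i≠j} cr(g_i,g_j)) ∪ {0,1}, and suppose |X| = |Y| = n+1; write X = {x_0 < x_1 < … < x_n} and Y = {y_0 < y_1 < … < y_n} (so x_0 = y_0 = 0 and x_n = y_n = 1), and set I_m = (x_{m−1}, x_m) and J_m = (y_{m−1}, y_m) for 1 ≤ m ≤ n. Suppose that for every m with 1 ≤ m ≤ n, φ is order-preserving on (I_m, J_m), meaning: (a) for all i, all x ∈ I_m and all y ∈ J_m, ⌊f_i(x)⌋ = ⌊g_i(y)⌋; and (b) for all i ≠ j, either ⟨f_i(x)⟩ < ⟨f_j(x)⟩ for all x ∈ I_m and ⟨g_i(y)⟩ < ⟨g_j(y)⟩ for all y ∈ J_m, or ⟨f_i(x)⟩ > ⟨f_j(x)⟩ for all x ∈ I_m and ⟨g_i(y)⟩ > ⟨g_j(y)⟩ for all y ∈ J_m. Then ⌊‖f_i − f_j‖⌋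 = ⌊‖g_i − g_j‖⌋ for all i, j; that is, φ is a step-isometry. -/

import Mathlib

open Set unitInterval

noncomputable section

lemma floor_abs_eq_floor_abs {s t : ℝ} (hst : ⌊s⌋ = ⌊t⌋)
    (hs : Int.fract s ≠ 0) (ht : Int.fract t ≠ 0) : ⌊|s|⌋ = ⌊|t|⌋ := by
  have hs1 : (⌊s⌋ : ℝ) < s := lt_of_le_of_ne (Int.floor_le s)
    fun h => hs (by rw [Int.fract, h, sub_self])
  have ht1 : (⌊t⌋ : ℝ) < t := lt_of_le_of_ne (Int.floor_le t)
    fun h => ht (by rw [Int.fract, h, sub_self])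
  rcases le_or_gt 0 ⌊s⌋ with h0 | h0
  · have hspos : 0 < s := lt_of_le_of_lt (by exact_mod_cast h0) hs1
    have htpos : 0 < t := lt_of_le_of_lt (by exact_mod_cast (hst ▸ h0)) ht1
    rw [abs_of_pos hspos, abs_of_pos htpos, hst]
  · have hsneg : s < 0 := lt_of_lt_of_le (Int.lt_floor_add_one s)
      (by exact_mod_cast Int.add_one_le_of_lt h0 : (⌊s⌋:ℝ) + 1 ≤ 0)
    have htneg : t < 0 := lt_of_lt_of_le (Int.lt_floor_add_one t)
      (by rw [← hst]; exact_mod_cast Int.add_one_le_of_lt h0)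
    rw [abs_of_neg hsneg, abs_of_neg htneg]
    have e1 : ⌊-s⌋ = -⌊s⌋ - 1 := by
      rw [Int.floor_eq_iff]
      constructor
      · push_cast; linarith [Int.lt_floor_add_one s]
      · push_cast; linarith
    have e2 : ⌊-t⌋ = -⌊t⌋ - 1 := by
      rw [Int.floor_eq_iff]
      constructor
      · push_cast; linarith [Int.lt_floor_add_one t]
      · push_cast; linarith
    rw [e1, e2, hst]

lemma floor_sub_fract (p q : ℝ) : ⌊p - q⌋ = ⌊Int.fract p - Int.fract q⌋ + (⌊p⌋ - ⌊q⌋) := by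
  have h : p - q = (Int.fract p - Int.fract q) + ((⌊p⌋ - ⌊q⌋ : ℤ) : ℝ) := by
    rw [Int.fract, Int.fract]; push_cast; ring
  rw [h, Int.floor_add_intCast]

lemma fract_sub_ne_zero {p q : ℝ} (h : Int.fract p ≠ Int.fract q) : Int.fract (p - q) ≠ 0 := by
  intro h0
  have h2 : p - q - ⌊p - q⌋ = 0 := by rw [← Int.fract]; exact h0
  have h3 : p = q + (⌊p - q⌋ : ℤ) := by linarith
  apply h
  rw [h3, Int.fract_add_intCast]

lemma key_floor_abs {p q p' q' : ℝ}
    (hA : ⌊p⌋ = ⌊p'⌋) (hB : ⌊q⌋ = ⌊q'⌋)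
    (hsign : (Int.fract p < Int.fract q ∧ Int.fract p' < Int.fract q') ∨
             (Int.fract q < Int.fract p ∧ Int.fract q' < Int.fract p')) :
    ⌊|p - q|⌋ = ⌊|p' - q'|⌋ := by
  have hfs : ∀ r s : ℝ, Int.fract r < Int.fract s → ⌊Int.fract r - Int.fract s⌋ = -1 := by
    intro r s h
    rw [Int.floor_eq_iff]
    constructor
    · push_cast; linarith [Int.fract_nonneg r, Int.fract_lt_one s]
    · push_cast; linarith
  have hfs' : ∀ r s : ℝ, Int.fract s < Int.fract r → ⌊Int.fract r - Int.fract s⌋ = 0 := by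
    intro r s h
    rw [Int.floor_eq_iff]
    constructor
    · exact_mod_cast le_of_lt (sub_pos.2 h)
    · push_cast; linarith [Int.fract_nonneg s, Int.fract_lt_one r]
  have hfloor : ⌊p - q⌋ = ⌊p' - q'⌋ := by
    rcases hsign with ⟨h1, h2⟩ | ⟨h1, h2⟩
    · rw [floor_sub_fract p q, floor_sub_fract p' q', hfs p q h1, hfs p' q' h2, hA, hB]
    · rw [floor_sub_fract p q, floor_sub_fract p' q', hfs' p q h1, hfs' p' q' h2, hA, hB]
  rcases hsign with ⟨h1, h2⟩ | ⟨h1, h2⟩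
  · exact floor_abs_eq_floor_abs hfloor (fract_sub_ne_zero (ne_of_lt h1))
      (fract_sub_ne_zero (ne_of_lt h2))
  · exact floor_abs_eq_floor_abs hfloor (fract_sub_ne_zero (ne_of_gt h1))
      (fract_sub_ne_zero (ne_of_gt h2))

lemma fract_abs_ne_zero {r : ℝ} (h : Int.fract r ≠ 0) : Int.fract |r| ≠ 0 := by
  rcases abs_choice r with h1 | h1 <;> rw [h1]
  · exact h
  · rw [Int.fract_neg h]
    have := Int.fract_lt_one r
    intro h2; linarith [sub_eq_zero.mp h2]


/-- The crossing set of two continuous functions on `[0,1]`: points where the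
fractional parts agree. -/
def cr (f g : C(unitInterval, ℝ)) : Set unitInterval :=
  {x | Int.fract (f x) = Int.fract (g x)}

/-- The crossing sets of distinct (unordered) pairs from `V` are pairwise disjoint. -/
def PairwiseDisjointCr (V : Set C(unitInterval, ℝ)) : Prop :=
  ∀ f g f' g' : C(unitInterval, ℝ), f ∈ V → g ∈ V → f' ∈ V → g' ∈ V →
    f ≠ g → f' ≠ g' → ({f, g} : Set C(unitInterval, ℝ)) ≠ {f', g'} →
    Disjoint (cr f g) (cr f' g')

/-- A transverse subset of `C[0,1]`. -/
def Transverse (V : Set C(unitInterval, ℝ)) : Prop :=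
  PairwiseDisjointCr V ∧
  ∀ f g : C(unitInterval, ℝ), f ∈ V → g ∈ V → f ≠ g →
    (cr f g).Finite ∧ (0 : unitInterval) ∉ cr f g ∧ (1 : unitInterval) ∉ cr f g ∧
    ∀ x ∈ cr f g, ¬ IsLocalExtr (fun t : unitInterval => f t - g t) x

lemma aux_le (k n : ℕ) (f g : Fin k → C(unitInterval, ℝ))
    (hf_inj : Function.Injective f)
    (hF : Transverse (Set.range f))
    (x y : Fin (n + 1) → unitInterval)
    (hx_mono : StrictMono x) (hy_mono : StrictMono y)
    (hx_range : Set.range x =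
      (⋃ (i : Fin k) (j : Fin k) (_ : i ≠ j), cr (f i) (f j)) ∪ ({0, 1} : Set unitInterval))
    (horder : ∀ m : Fin n,
      (∀ i : Fin k, ∀ a ∈ Set.Ioo (x m.castSucc) (x m.succ),
        ∀ b ∈ Set.Ioo (y m.castSucc) (y m.succ), ⌊f i a⌋ = ⌊g i b⌋) ∧
      (∀ i j : Fin k, i ≠ j →
        ((∀ a ∈ Set.Ioo (x m.castSucc) (x m.succ), Int.fract (f i a) < Int.fract (f j a)) ∧
          (∀ b ∈ Set.Ioo (y m.castSucc) (y m.succ), Int.fract (g i b) < Int.fract (g j b))) ∨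
        ((∀ a ∈ Set.Ioo (x m.castSucc) (x m.succ), Int.fract (f j a) < Int.fract (f i a)) ∧
          (∀ b ∈ Set.Ioo (y m.castSucc) (y m.succ), Int.fract (g j b) < Int.fract (g i b)))))
    (i j : Fin k) : ⌊‖f i - f j‖⌋ ≤ ⌊‖g i - g j‖⌋ := by
  by_cases hij : i = j
  · subst hij; simp
  -- basic facts about x
  have h0mem : (0 : unitInterval) ∈ Set.range x := by
    rw [hx_range]; right; left; rfl
  have h1mem : (1 : unitInterval) ∈ Set.range x := by
    rw [hx_range]; right; right; rfl
  have hx0 : x 0 = 0 := by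
    obtain ⟨m, hm⟩ := h0mem
    exact le_antisymm (hm ▸ hx_mono.monotone (Fin.zero_le m)) (x 0).2.1
  have hxl : x (Fin.last n) = 1 := by
    obtain ⟨m, hm⟩ := h1mem
    exact le_antisymm (x (Fin.last n)).2.2 (hm ▸ hx_mono.monotone (Fin.le_last m))
  have hn : n ≠ 0 := by
    intro h
    subst h
    have : (0 : unitInterval) = 1 := by rw [← hx0, ← hxl]; rfl
    exact zero_ne_one (congrArg Subtype.val this)
  -- the function F and its maximizer
  set F : unitInterval → ℝ := fun t => f i t - f j t with hF_def
  have hFcont : Continuous F := (f i).continuous.sub (f j).continuous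
  obtain ⟨c, -, hc⟩ := isCompact_univ.exists_isMaxOn univ_nonempty hFcont.abs.continuousOn
  have hc' : ∀ t, |F t| ≤ |F c| := fun t => hc (mem_univ t)
  have hnorm : ‖f i - f j‖ = |F c| := by
    refine le_antisymm ((ContinuousMap.norm_le _ (abs_nonneg _)).2 fun t => ?_) ?_
    · simpa [Real.norm_eq_abs] using hc' t
    · simpa [Real.norm_eq_abs] using (f i - f j).norm_coe_le_norm c
  -- F c is not an integer
  have hfij : f i ≠ f j := fun h => hij (hf_inj h)
  have hfract : Int.fract (F c) ≠ 0 := by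
    intro h0
    have hcr : c ∈ cr (f i) (f j) := by
      have h2 : F c - ⌊F c⌋ = 0 := by rw [← Int.fract]; exact h0
      have h3 : f i c = f j c + (⌊F c⌋ : ℤ) := by
        simp only [hF_def] at h2 ⊢; linarith
      show Int.fract (f i c) = Int.fract (f j c)
      rw [h3, Int.fract_add_intCast]
    have hnoext := (hF.2 (f i) (f j) ⟨i, rfl⟩ ⟨j, rfl⟩ hfij).2.2.2 c hcr
    apply hnoext
    rcases le_or_gt 0 (F c) with hFc | hFc
    · right
      apply IsMaxOn.isLocalMax _ (Filter.univ_mem)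
      intro t _
      calc F t ≤ |F t| := le_abs_self _
        _ ≤ |F c| := hc' t
        _ = F c := abs_of_nonneg hFc
    · left
      apply IsMinOn.isLocalMin _ (Filter.univ_mem)
      intro t _
      calc F c = -|F c| := by rw [abs_of_neg hFc, neg_neg]
        _ ≤ -|F t| := neg_le_neg (hc' t)
        _ ≤ F t := neg_abs_le _
  have habs : Int.fract |F c| ≠ 0 := fract_abs_ne_zero hfract
  -- the open set S where floor of |F| is preserved
  set S : Set unitInterval := (fun t => |F t|) ⁻¹' Ioo (⌊|F c|⌋ : ℝ) ((⌊|F c|⌋ : ℝ) + 1)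
    with hS_def
  have hSopen : IsOpen S := isOpen_Ioo.preimage hFcont.abs
  have hcS : c ∈ S := by
    constructor
    · exact lt_of_le_of_ne (Int.floor_le _) fun h => habs (by rw [Int.fract, h, sub_self])
    · exact Int.lt_floor_add_one _
  -- find m and a ∈ I_m ∩ S
  have key : ∃ m : Fin n, ∃ a ∈ Set.Ioo (x m.castSucc) (x m.succ), a ∈ S := by
    by_cases hcr : c ∈ Set.range x
    · obtain ⟨m₀, hm₀⟩ := hcr
      by_cases hlast : m₀ = Fin.last n
      · -- use interval to the left
        have hm0 : m₀ ≠ 0 := by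
          rw [hlast]
          exact fun h => hn (by simpa using congrArg Fin.val h)
        obtain ⟨m, hm⟩ := Fin.exists_succ_eq.2 hm0
        refine ⟨m, ?_⟩
        have hlt : x m.castSucc < x m.succ := hx_mono (Fin.castSucc_lt_succ (i := m))
        have hceq : x m.succ = c := by rw [hm, hm₀]
        have hcl : c ∈ closure (Set.Ioo (x m.castSucc) (x m.succ)) := by
          rw [closure_Ioo (ne_of_lt hlt)]
          exact ⟨hceq ▸ hlt.le, hceq.ge⟩
        obtain ⟨a, haS, haI⟩ := mem_closure_iff.1 hcl S hSopen hcS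
        exact ⟨a, haI, haS⟩
      · obtain ⟨m, hm⟩ := Fin.exists_castSucc_eq.2 hlast
        refine ⟨m, ?_⟩
        have hlt : x m.castSucc < x m.succ := hx_mono (Fin.castSucc_lt_succ (i := m))
        have hceq : x m.castSucc = c := by rw [hm, hm₀]
        have hcl : c ∈ closure (Set.Ioo (x m.castSucc) (x m.succ)) := by
          rw [closure_Ioo (ne_of_lt hlt)]
          exact ⟨hceq.le, hceq ▸ hlt.le⟩
        obtain ⟨a, haS, haI⟩ := mem_closure_iff.1 hcl S hSopen hcS
        exact ⟨a, haI, haS⟩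
    · -- c is in one of the open intervals
      have hc0 : (0 : unitInterval) < c :=
        lt_of_le_of_ne c.2.1 (fun h => hcr (h ▸ h0mem))
      have hc1 : c < 1 :=
        lt_of_le_of_ne c.2.2 (fun h => hcr (h.symm ▸ h1mem) : c ≠ 1)
      set M : Finset (Fin (n+1)) := Finset.univ.filter (fun m => x m < c) with hM_def
      have hMne : M.Nonempty := ⟨0, by simp [hM_def, hx0, hc0]⟩
      set m₀ := M.max' hMne with hm₀_def
      have hm₀M : m₀ ∈ M := M.max'_mem hMne
      have hm₀lt : x m₀ < c := by simpa [hM_def] using hm₀M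
      have hlast : m₀ ≠ Fin.last n := by
        intro h
        rw [h, hxl] at hm₀lt
        exact absurd hm₀lt (not_lt_of_gt hc1)
      obtain ⟨m, hm⟩ := Fin.exists_castSucc_eq.2 hlast
      refine ⟨m, c, ⟨hm ▸ hm₀lt, ?_⟩, hcS⟩
      have hnotlt : ¬ x m.succ < c := by
        intro h
        have : m.succ ∈ M := by simp [hM_def, h]
        have hle := M.le_max' _ this
        rw [← hm₀_def] at hle
        exact absurd (lt_of_lt_of_le (Fin.castSucc_lt_succ (i := m)) (hm ▸ hle)) (lt_irrefl _)
      exact lt_of_le_of_ne (not_lt.1 hnotlt) (fun h => hcr ⟨m.succ, h.symm⟩)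
  obtain ⟨m, a, haI, haS⟩ := key
  -- pick b in J_m
  obtain ⟨b, hb⟩ := exists_between (hy_mono (Fin.castSucc_lt_succ (i := m)))
  -- floors agree
  have hfa : ⌊|F a|⌋ = ⌊|F c|⌋ := by
    obtain ⟨hl, hr⟩ := haS
    rw [Int.floor_eq_iff]
    exact ⟨le_of_lt hl, hr⟩
  have hA : ⌊f i a⌋ = ⌊g i b⌋ := (horder m).1 i a haI b hb
  have hB : ⌊f j a⌋ = ⌊g j b⌋ := (horder m).1 j a haI b hb
  have hkey : ⌊|F a|⌋ = ⌊|g i b - g j b|⌋ := by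
    apply key_floor_abs hA hB
    rcases (horder m).2 i j hij with ⟨h1, h2⟩ | ⟨h1, h2⟩
    · exact Or.inl ⟨h1 a haI, h2 b hb⟩
    · exact Or.inr ⟨h1 a haI, h2 b hb⟩
  calc ⌊‖f i - f j‖⌋ = ⌊|F c|⌋ := by rw [hnorm]
    _ = ⌊|g i b - g j b|⌋ := by rw [← hfa, hkey]
    _ ≤ ⌊‖g i - g j‖⌋ := by
        apply Int.floor_le_floor
        simpa [Real.norm_eq_abs] using (g i - g j).norm_coe_le_norm b

/-- Lemma 2.3 of the paper: if a bijection between finite transverse families is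
order-preserving on all corresponding intervals of the crossing decompositions,
then it is a step-isometry. -/
theorem order_preserving_is_step_isometry
    (k n : ℕ) (f g : Fin k → C(unitInterval, ℝ))
    (hf_inj : Function.Injective f) (hg_inj : Function.Injective g)
    (hF : Transverse (Set.range f)) (hG : Transverse (Set.range g))
    (x y : Fin (n + 1) → unitInterval)
    (hx_mono : StrictMono x) (hy_mono : StrictMono y)
    (hx_range : Set.range x =
      (⋃ (i : Fin k) (j : Fin k) (_ : i ≠ j), cr (f i) (f j)) ∪ ({0, 1} : Set unitInterval))
    (hy_range : Set.range y =
      (⋃ (i : Fin k) (j : Fin k) (_ : i ≠ j), cr (g i) (g j)) ∪ ({0, 1} : Set unitInterval))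
    (horder : ∀ m : Fin n,
      (∀ i : Fin k, ∀ a ∈ Set.Ioo (x m.castSucc) (x m.succ),
        ∀ b ∈ Set.Ioo (y m.castSucc) (y m.succ), ⌊f i a⌋ = ⌊g i b⌋) ∧
      (∀ i j : Fin k, i ≠ j →
        ((∀ a ∈ Set.Ioo (x m.castSucc) (x m.succ), Int.fract (f i a) < Int.fract (f j a)) ∧
          (∀ b ∈ Set.Ioo (y m.castSucc) (y m.succ), Int.fract (g i b) < Int.fract (g j b))) ∨
        ((∀ a ∈ Set.Ioo (x m.castSucc) (x m.succ), Int.fract (f j a) < Int.fract (f i a)) ∧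
          (∀ b ∈ Set.Ioo (y m.castSucc) (y m.succ), Int.fract (g j b) < Int.fract (g i b))))) :
    ∀ i j : Fin k, ⌊‖f i - f j‖⌋ = ⌊‖g i - g j‖⌋ := by
  intro i j
  have horder' : ∀ m : Fin n,
      (∀ i : Fin k, ∀ b ∈ Set.Ioo (y m.castSucc) (y m.succ),
        ∀ a ∈ Set.Ioo (x m.castSucc) (x m.succ), ⌊g i b⌋ = ⌊f i a⌋) ∧
      (∀ i j : Fin k, i ≠ j →
        ((∀ b ∈ Set.Ioo (y m.castSucc) (y m.succ), Int.fract (g i b) < Int.fract (g j b)) ∧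
          (∀ a ∈ Set.Ioo (x m.castSucc) (x m.succ), Int.fract (f i a) < Int.fract (f j a))) ∨
        ((∀ b ∈ Set.Ioo (y m.castSucc) (y m.succ), Int.fract (g j b) < Int.fract (g i b)) ∧
          (∀ a ∈ Set.Ioo (x m.castSucc) (x m.succ), Int.fract (f j a) < Int.fract (f i a)))) := by
    intro m
    obtain ⟨h1, h2⟩ := horder m
    refine ⟨fun i b hb a ha => (h1 i a ha b hb).symm, fun i j hij => ?_⟩
    rcases h2 i j hij with ⟨ha, hb⟩ | ⟨ha, hb⟩
    · exact Or.inl ⟨hb, ha⟩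
    · exact Or.inr ⟨hb, ha⟩
  exact le_antisymm
    (aux_le k n f g hf_inj hF x y hx_mono hy_mono hx_range horder i j)
    (aux_le k n g f hg_inj hG y x hy_mono hx_mono hy_range horder' i j)
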